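/- The natural density of squarefree integers is 6/π²: if Qₙ denotes the proportion of integers in {1, …, n} that are squarefree (not divisible by the square of any integer greater than 1), i.e., Qₙ = #{x ∈ {1,…,n} : x squarefree} / n, then Qₙ → 6/π² as n → ∞. -/

import Mathlib

open Filter Topology Real Finset ArithmeticFunction
open scoped ArithmeticFunction.Moebius ArithmeticFunction.zeta

lemma dvd_sq_iff_of_decomp {x a b : ℕ} (hx : x ≠ 0) (hab : b ^ 2 * a = x)
    (ha : Squarefree a) (d : ℕ) (hd : d ≠ 0) : d ^ 2 ∣ x ↔ d ∣ b := by
  have ha0 : a ≠ 0 := fun h => by simp [h] at hab; exact hx hab.symm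
  have hb0 : b ≠ 0 := fun h => by simp [h] at hab; exact hx hab.symm
  constructor
  · intro hdvd
    rw [← Nat.factorization_le_iff_dvd hd hb0]
    rw [← Nat.factorization_le_iff_dvd (pow_ne_zero 2 hd) hx] at hdvd
    intro p
    have h1 := hdvd p
    rw [← hab, Nat.factorization_mul (pow_ne_zero 2 hb0) ha0, Nat.factorization_pow,
      Nat.factorization_pow] at h1
    have h2 : a.factorization p ≤ 1 := ha.natFactorization_le_one p
    simp only [Finsupp.coe_add, Finsupp.coe_smul, Pi.add_apply, Pi.smul_apply,
      smul_eq_mul] at h1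
    omega
  · intro hdvd
    exact hab ▸ Dvd.dvd.mul_right (pow_dvd_pow_of_dvd hdvd 2) a

lemma sum_moebius_sq_dvd {n x : ℕ} (hx : x ≠ 0) (hxn : x ≤ n) :
    (∑ d ∈ Finset.Icc 1 n, if d ^ 2 ∣ x then (μ d : ℤ) else 0)
      = if Squarefree x then 1 else 0 := by
  obtain ⟨a, b, hab, ha⟩ := Nat.sq_mul_squarefree x
  have ha0 : a ≠ 0 := fun h => by simp [h] at hab; exact hx hab.symm
  have hb0 : b ≠ 0 := fun h => by simp [h] at hab; exact hx hab.symm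
  have key : ∑ d ∈ Finset.Icc 1 n, (if d ^ 2 ∣ x then (μ d : ℤ) else 0)
      = ∑ d ∈ b.divisors, (μ d : ℤ) := by
    rw [← Finset.sum_filter]
    apply Finset.sum_congr _ (fun _ _ => rfl)
    ext d
    simp only [Finset.mem_filter, Finset.mem_Icc, Nat.mem_divisors]
    constructor
    · rintro ⟨⟨h1, h2⟩, h3⟩
      exact ⟨(dvd_sq_iff_of_decomp hx hab ha d (by omega)).mp h3, hb0⟩
    · rintro ⟨h1, -⟩
      have hd0 : d ≠ 0 := fun h => by subst h; exact hb0 (Nat.eq_zero_of_zero_dvd h1)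
      refine ⟨⟨Nat.one_le_iff_ne_zero.mpr hd0, ?_⟩,
        (dvd_sq_iff_of_decomp hx hab ha d hd0).mpr h1⟩
      calc d ≤ b := Nat.le_of_dvd (Nat.pos_of_ne_zero hb0) h1
        _ ≤ b ^ 2 * a := le_trans (Nat.le_self_pow two_ne_zero b)
            (Nat.le_mul_of_pos_right _ (Nat.pos_of_ne_zero ha0))
        _ = x := hab
        _ ≤ n := hxn
  rw [key]
  have := congrArg (fun f : ArithmeticFunction ℤ => f b) moebius_mul_coe_zeta
  simp only [coe_mul_zeta_apply] at this
  rw [this, one_apply]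
  congr 1
  simp only [eq_iff_iff]
  constructor
  · rintro rfl
    rw [← hab]; simpa using ha
  · intro hsf
    have : b * b ∣ x := by rw [← hab]; exact Dvd.intro a (by ring)
    exact Nat.isUnit_iff.mp (hsf b this)

lemma card_squarefree_eq (n : ℕ) :
    ((((Finset.Icc 1 n).filter fun x => Squarefree x).card : ℤ))
      = ∑ d ∈ Finset.Icc 1 n, (μ d : ℤ) * (n / d ^ 2 : ℕ) := by
  have : ((((Finset.Icc 1 n).filter fun x => Squarefree x).card : ℤ))
      = ∑ x ∈ Finset.Icc 1 n, if Squarefree x then (1 : ℤ) else 0 := by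
    rw [Finset.card_filter]
    push_cast
    rfl
  rw [this]
  have step : ∀ x ∈ Finset.Icc 1 n, (if Squarefree x then (1 : ℤ) else 0)
      = ∑ d ∈ Finset.Icc 1 n, if d ^ 2 ∣ x then (μ d : ℤ) else 0 := by
    intro x hx
    simp only [Finset.mem_Icc] at hx
    exact (sum_moebius_sq_dvd (by omega) hx.2).symm
  rw [Finset.sum_congr rfl step, Finset.sum_comm]
  apply Finset.sum_congr rfl
  intro d hd
  rw [← Finset.sum_filter, Finset.sum_const, nsmul_eq_mul, mul_comm]
  congr 1
  have h1 : Finset.Icc 1 n = Finset.Ioc 0 n := rfl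
  rw [h1]
  exact_mod_cast Nat.Ioc_filter_dvd_card_eq_div n (d ^ 2)

lemma moebius_tsum_real : ∑' d : ℕ, (μ d : ℝ) / (d : ℝ) ^ 2 = 6 / π ^ 2 := by
  have h2 : (1 : ℝ) < (2 : ℂ).re := by norm_num
  have hz : LSeries (fun n => ((ζ n : ℕ) : ℂ)) 2 * LSeries (fun n => ((μ n : ℤ) : ℂ)) 2 = 1 :=
    LSeries_zeta_mul_Lseries_moebius h2
  have hze : LSeries (fun n => ((ζ n : ℕ) : ℂ)) 2 = (π : ℂ) ^ 2 / 6 :=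
    (LSeries_zeta_eq_riemannZeta h2).trans riemannZeta_two
  have hpi : (π : ℂ) ≠ 0 := Complex.ofReal_ne_zero.mpr Real.pi_ne_zero
  have hmu : LSeries (fun n => ((μ n : ℤ) : ℂ)) 2 = 6 / (π : ℂ) ^ 2 := by
    rw [hze] at hz
    field_simp at hz ⊢
    linear_combination hz
  have hterm : LSeries (fun n => ((μ n : ℤ) : ℂ)) 2
      = ∑' d : ℕ, ((μ d : ℤ) : ℂ) / (d : ℂ) ^ 2 := by
    refine tsum_congr fun d => ?_
    rcases eq_or_ne d 0 with rfl | hd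
    · simp [LSeries.term]
    · rw [LSeries.term_of_ne_zero hd]
      norm_num [Complex.cpow_natCast ((d : ℂ)) 2]
  apply Complex.ofReal_injective
  rw [Complex.ofReal_tsum]
  push_cast
  rw [← hterm, hmu]

theorem squarefree_density :
    Tendsto (fun n : ℕ =>
        (((Finset.Icc 1 n).filter fun x => Squarefree x).card : ℝ) / (n : ℝ))
      atTop (𝓝 (6 / π ^ 2)) := by
  set F : ℕ → ℕ → ℝ := fun n d => (μ d : ℝ) * ((n / d ^ 2 : ℕ) : ℝ) / n with hF
  have hbound : Summable (fun d : ℕ => 1 / (d : ℝ) ^ 2) :=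
    Real.summable_one_div_nat_pow.mpr one_lt_two
  -- pointwise limits
  have hlim : ∀ d : ℕ, Tendsto (fun n => F n d) atTop (𝓝 ((μ d : ℝ) / (d : ℝ) ^ 2)) := by
    intro d
    rcases eq_or_ne d 0 with rfl | hd
    · simpa [hF] using tendsto_const_nhds (α := ℝ) (f := atTop (α := ℕ))
    · have hd1 : (1 : ℝ) ≤ (d : ℝ) := by exact_mod_cast Nat.one_le_iff_ne_zero.mpr hd
      have hd2 : (0 : ℝ) < (d : ℝ) ^ 2 := by positivity
      have key : Tendsto (fun n : ℕ => ((n / d ^ 2 : ℕ) : ℝ) / n) atTop (𝓝 (1 / (d : ℝ) ^ 2)) := by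
        apply tendsto_of_tendsto_of_tendsto_of_le_of_le'
          (g := fun n : ℕ => 1 / (d : ℝ) ^ 2 - 1 / n) (h := fun _ => 1 / (d : ℝ) ^ 2)
        · have h0 : Tendsto (fun n : ℕ => 1 / (n : ℝ)) atTop (𝓝 0) :=
            tendsto_one_div_atTop_nhds_zero_nat
          have hc := (tendsto_const_nhds (x := 1 / (d : ℝ) ^ 2) (f := atTop (α := ℕ))).sub h0
          rw [sub_zero] at hc
          exact hc
        · exact tendsto_const_nhds
        · filter_upwards [eventually_ge_atTop 1] with n hn
          have hn0 : (0 : ℝ) < n := by exact_mod_cast hn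
          have h1 : (n : ℝ) ≤ (d : ℝ) ^ 2 * ((n / d ^ 2 : ℕ) : ℝ) + (d : ℝ) ^ 2 := by
            have hq := Nat.div_add_mod n (d ^ 2)
            have hr : n % d ^ 2 < d ^ 2 := Nat.mod_lt n (by positivity)
            have hlt : n ≤ d ^ 2 * (n / d ^ 2) + d ^ 2 := by omega
            exact_mod_cast hlt
          rw [div_sub_div _ _ (ne_of_gt hd2) (ne_of_gt hn0), div_le_div_iff₀ (by positivity) hn0]
          nlinarith
        · filter_upwards [eventually_ge_atTop 1] with n hn
          have hn0 : (0 : ℝ) < n := by exact_mod_cast hn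
          have h1 : ((n / d ^ 2 : ℕ) : ℝ) ≤ (n : ℝ) / (d : ℝ) ^ 2 := by
            exact_mod_cast Nat.cast_div_le (α := ℝ)
          have h4 := mul_le_mul_of_nonneg_right h1 hd2.le
          rw [div_mul_cancel₀ _ (ne_of_gt hd2)] at h4
          rw [div_le_div_iff₀ hn0 hd2]
          linarith
      have := key.const_mul (μ d : ℝ)
      simpa [hF, mul_div_assoc, mul_one_div, div_eq_mul_inv, mul_assoc] using this
  -- domination
  have hdom : ∀ᶠ n in atTop, ∀ d : ℕ, ‖F n d‖ ≤ 1 / (d : ℝ) ^ 2 := by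
    filter_upwards [eventually_ge_atTop 1] with n hn
    intro d
    rcases eq_or_ne d 0 with rfl | hd
    · simp [hF]
    · have hn0 : (0 : ℝ) < n := by exact_mod_cast hn
      have hd2 : (0 : ℝ) < (d : ℝ) ^ 2 := by
        have : (1 : ℝ) ≤ (d : ℝ) := by exact_mod_cast Nat.one_le_iff_ne_zero.mpr hd
        positivity
      have hmu : |(μ d : ℝ)| ≤ 1 := by exact_mod_cast (abs_moebius_le_one (n := d))
      have h1 : (0:ℝ) ≤ ((n / d ^ 2 : ℕ) : ℝ) / n := by positivity
      have h2 : ((n / d ^ 2 : ℕ) : ℝ) / n ≤ 1 / (d : ℝ) ^ 2 := by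
        have h3 : ((n / d ^ 2 : ℕ) : ℝ) ≤ (n : ℝ) / (d : ℝ) ^ 2 := by
          exact_mod_cast Nat.cast_div_le (α := ℝ)
        have h4 := mul_le_mul_of_nonneg_right h3 hd2.le
        rw [div_mul_cancel₀ _ (ne_of_gt hd2)] at h4
        rw [div_le_div_iff₀ hn0 hd2]
        linarith
      calc ‖F n d‖ = |(μ d : ℝ)| * (((n / d ^ 2 : ℕ) : ℝ) / n) := by
            simp [hF, abs_mul, abs_div, Nat.abs_cast, mul_div_assoc]
        _ ≤ 1 * (1 / (d : ℝ) ^ 2) := mul_le_mul hmu h2 h1 zero_le_one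
        _ = 1 / (d : ℝ) ^ 2 := one_mul _
  have main := tendsto_tsum_of_dominated_convergence hbound hlim hdom
  rw [moebius_tsum_real] at main
  apply main.congr'
  filter_upwards [eventually_ge_atTop 1] with n hn
  have hn0 : (n : ℝ) ≠ 0 := by positivity
  have hts : ∑' d, F n d = ∑ d ∈ Finset.Icc 1 n, F n d := by
    apply tsum_eq_sum
    intro d hd
    simp only [Finset.mem_Icc, not_and_or, not_le] at hd
    rcases hd with hd | hd
    · interval_cases d
      simp [hF]
    · have : n / d ^ 2 = 0 := Nat.div_eq_of_lt (lt_of_lt_of_le hd (Nat.le_self_pow two_ne_zero d))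
      simp [hF, this]
  rw [hts]
  have hsd : ∑ d ∈ Finset.Icc 1 n, F n d
      = (∑ d ∈ Finset.Icc 1 n, (μ d : ℝ) * ((n / d ^ 2 : ℕ) : ℝ)) / n := by
    rw [Finset.sum_div]
  rw [hsd]
  congr 1
  have h2 : ((∑ d ∈ Finset.Icc 1 n, (μ d : ℤ) * (n / d ^ 2 : ℕ) : ℤ) : ℝ)
      = ((((Finset.Icc 1 n).filter fun x => Squarefree x).card : ℤ) : ℝ) := by
    exact_mod_cast congrArg (fun z : ℤ => (z : ℝ)) (card_squarefree_eq n).symm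
  simp only [Int.cast_sum, Int.cast_mul, Int.cast_natCast] at h2
  exact h2
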